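/- Let p be a prime, n ≥ 1 an integer, and ψ : F_p → ℂˣ a nontrivial additive character. Let χ₁, χ₂ : F_{p^n}ˣ → ℂˣ be regular multiplicative characters with G(χ₁, ψ) = G(χ₂, ψ). Then the Gauss sums of the inverse characters are also equal: G(χ₁⁻¹, ψ) = G(χ₂⁻¹, ψ). -/

import Mathlib

open scoped Classical

/-- The Gauss sum over `E` of the multiplicative character `χ` with respect to the
additive character `ψ` of the base field `F` (composed with the trace map):
`G(χ, ψ) = ∑_{x ∈ Eˣ} χ(x) ψ(Tr(x))`. -/
noncomputable def gaussSumE (F : Type) {E : Type} [Field F] [Field E] [Fintype F]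
    [Fintype E] [Algebra F E] (χ : Eˣ →* ℂˣ) (ψ : AddChar F ℂ) : ℂ :=
  ∑ x : Eˣ, (χ x : ℂ) * ψ (Algebra.trace F E (x : E))

/-- A multiplicative character `χ` of `Eˣ` is *regular* if it does not factor through
the norm map to any proper subfield of `E`. -/
def IsRegularChar {E : Type} [Field E] [Fintype E] (χ : Eˣ →* ℂˣ) : Prop :=
  ∀ K : Subfield E, K ≠ ⊤ →
    ¬ ∃ η : Kˣ →* ℂˣ, ∀ x : Eˣ, χ x = η (Units.map (Algebra.norm K : E →* K) x)

private lemma pow_congr_mod' {a : ℂ} {m : ℕ} (h : a ^ m = 1) {b c : ℕ}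
    (hbc : b ≡ c [MOD m]) : a ^ b = a ^ c := by
  have e : ∀ d : ℕ, a ^ d = a ^ (d % m) := by
    intro d
    conv_lhs => rw [← Nat.div_add_mod d m]
    rw [pow_add, pow_mul, h, one_pow, one_mul]
  rw [e b, e c, show b % m = c % m from hbc]

open IntermediateField in
private lemma exists_sigma (M c : ℕ) (hM : M ≠ 0) (hc : Nat.Coprime c M) :
    ∃ (K : IntermediateField ℚ ℂ) (σ : K →+* ℂ),
      ∀ ω : ℂ, ω ^ M = 1 → ∃ hω : ω ∈ K, σ ⟨ω, hω⟩ = ω ^ c := by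
  haveI : NeZero M := ⟨hM⟩
  have hMpos : 0 < M := Nat.pos_of_ne_zero hM
  set ζ : ℂ := Complex.exp (2 * Real.pi * Complex.I / M) with hζ
  have hprim : IsPrimitiveRoot ζ M := Complex.isPrimitiveRoot_exp M hM
  have hint : IsIntegral ℚ ζ := (hprim.isIntegral hMpos).tower_top
  have hprimc : IsPrimitiveRoot (ζ ^ c) M := hprim.pow_of_coprime c hc
  have hroot : Polynomial.aeval (ζ ^ c)
      (minpoly ℚ (IntermediateField.AdjoinSimple.gen ℚ ζ)) = 0 := by
    rw [show minpoly ℚ (IntermediateField.AdjoinSimple.gen ℚ ζ) = minpoly ℚ ζ from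
        IntermediateField.minpoly_gen ℚ ζ,
      ← Polynomial.cyclotomic_eq_minpoly_rat hprim hMpos, Polynomial.aeval_def,
      ← Polynomial.eval_map, Polynomial.map_cyclotomic]
    exact hprimc.isRoot_cyclotomic hMpos
  have hgenroot : Polynomial.aeval (ζ ^ c)
      (minpoly ℚ (IntermediateField.adjoin.powerBasis hint).gen) = 0 := by
    rwa [IntermediateField.adjoin.powerBasis_gen]
  refine ⟨ℚ⟮ζ⟯,
    ((IntermediateField.adjoin.powerBasis hint).lift (ζ ^ c) hgenroot).toRingHom, ?_⟩
  intro ω hω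
  obtain ⟨i, _, hi⟩ := hprim.eq_pow_of_pow_eq_one hω
  have hmem : ω ∈ ℚ⟮ζ⟯ := by
    rw [← hi]; exact pow_mem (IntermediateField.mem_adjoin_simple_self ℚ ζ) i
  refine ⟨hmem, ?_⟩
  have hgen : (⟨ω, hmem⟩ : ℚ⟮ζ⟯) = (IntermediateField.AdjoinSimple.gen ℚ ζ) ^ i := by
    ext
    push_cast
    exact hi.symm
  have hliftgen : ((IntermediateField.adjoin.powerBasis hint).lift (ζ ^ c) hgenroot)
      (IntermediateField.AdjoinSimple.gen ℚ ζ) = ζ ^ c := by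
    conv_lhs => rw [← IntermediateField.adjoin.powerBasis_gen hint]
    exact PowerBasis.lift_gen _ _ _
  rw [hgen]
  simp only [AlgHom.toRingHom_eq_coe, RingHom.coe_coe, map_pow, hliftgen]
  rw [← pow_mul, mul_comm c i, pow_mul, hi]

theorem gauss_sum_inv_eq_of_gauss_sum_eq
    (p n : ℕ) [hp : Fact p.Prime] (hn : 1 ≤ n)
    (E : Type) [Field E] [Fintype E] [Algebra (ZMod p) E]
    (hE : Fintype.card E = p ^ n)
    (ψ : AddChar (ZMod p) ℂ) (hψ : ψ ≠ 1)
    (χ₁ χ₂ : Eˣ →* ℂˣ) (hχ₁ : IsRegularChar χ₁) (hχ₂ : IsRegularChar χ₂)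
    (h : gaussSumE (ZMod p) χ₁ ψ = gaussSumE (ZMod p) χ₂ ψ) :
    gaussSumE (ZMod p) χ₁⁻¹ ψ = gaussSumE (ZMod p) χ₂⁻¹ ψ := by
  have hp2 : 2 ≤ p := hp.out.two_le
  have hq2 : 2 ≤ p ^ n := le_trans hp2 (by
    calc p = p ^ 1 := (pow_one p).symm
    _ ≤ p ^ n := Nat.pow_le_pow_right (by omega) hn)
  have hpdvd : p ∣ p ^ n := dvd_pow_self p (by omega)
  obtain ⟨q, hqdef⟩ : ∃ q, q = p ^ n := ⟨_, rfl⟩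
  rw [← hqdef] at hE hq2 hpdvd
  obtain ⟨m, hm⟩ : ∃ m, m = q - 1 := ⟨_, rfl⟩
  have hm1 : 1 ≤ m := by omega
  have hcardU : Fintype.card Eˣ = m := by rw [Fintype.card_units, hE, hm]
  have hMne : p * m ≠ 0 := by
    have : 0 < p * m := Nat.mul_pos (by omega) (by omega)
    omega
  -- p is coprime to m
  have hco : Nat.Coprime p m := by
    rw [Nat.Prime.coprime_iff_not_dvd hp.out]
    intro hdvd
    have h3 : p ∣ q - m := Nat.dvd_sub hpdvd hdvd
    rw [show q - m = 1 by omega] at h3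
    exact absurd (Nat.dvd_one.mp h3) (by omega)
  obtain ⟨c, hc1, hc2⟩ := Nat.chineseRemainder hco (p - 1) 1
  -- c is coprime to p * m
  have hcp : Nat.Coprime c p := by
    rw [Nat.coprime_comm, Nat.Prime.coprime_iff_not_dvd hp.out]
    intro hdvd
    have h0 : c % p = 0 := Nat.mod_eq_zero_of_dvd hdvd
    have h1 : c % p = (p - 1) % p := hc1
    have h1' : (p - 1) % p = p - 1 := Nat.mod_eq_of_lt (by omega)
    rw [h1', h0] at h1
    omega
  have hcm : Nat.Coprime c m := by
    have h1 : c % m = 1 % m := hc2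
    have : Nat.gcd m c = 1 := by
      rw [Nat.gcd_rec m c, h1, ← Nat.gcd_rec m 1, Nat.gcd_one_right]
    exact Nat.coprime_comm.mp this
  have hcM : Nat.Coprime c (p * m) := Nat.Coprime.mul_right hcp hcm
  -- basic facts about ψ values
  have hψp : ∀ t : ZMod p, ψ t ^ p = 1 := by
    intro t
    rw [← AddChar.map_nsmul_eq_pow]
    have hpt : p • t = 0 := by
      rw [nsmul_eq_mul]
      simp [ZMod.natCast_self]
    rw [hpt, AddChar.map_zero_eq_one]
  have hψinv : ∀ t : ZMod p, ψ (-t) * ψ t = 1 := by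
    intro t
    rw [← AddChar.map_add_eq_mul]
    simp
  have hψsub : ∀ t : ZMod p, ψ t ^ (p - 1) = ψ (-t) := by
    intro t
    have hne : ψ t ≠ 0 := right_ne_zero_of_mul_eq_one (hψinv t)
    have h1 : ψ t ^ (p - 1) * ψ t = 1 := by
      rw [← pow_succ, show p - 1 + 1 = p by omega, hψp]
    exact mul_right_cancel₀ hne (h1.trans (hψinv t).symm)
  have hψc : ∀ t : ZMod p, ψ t ^ c = ψ (-t) := fun t =>
    (pow_congr_mod' (hψp t) hc1).trans (hψsub t)
  -- basic facts about χ values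
  have hχm : ∀ (χ : Eˣ →* ℂˣ) (x : Eˣ), (χ x : ℂ) ^ m = 1 := by
    intro χ x
    rw [← Units.val_pow_eq_pow_val, ← map_pow, ← hcardU, pow_card_eq_one, map_one,
      Units.val_one]
  have hχc : ∀ (χ : Eˣ →* ℂˣ) (x : Eˣ), (χ x : ℂ) ^ c = (χ x : ℂ) := by
    intro χ x
    have := pow_congr_mod' (hχm χ x) hc2
    rwa [pow_one] at this
  have hχM : ∀ (χ : Eˣ →* ℂˣ) (x : Eˣ), (χ x : ℂ) ^ (p * m) = 1 := by
    intro χ x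
    rw [pow_mul', hχm, one_pow]
  have hψM : ∀ t : ZMod p, ψ t ^ (p * m) = 1 := by
    intro t
    rw [pow_mul, hψp, one_pow]
  have hsq : ∀ χ : Eˣ →* ℂˣ, (χ (-1) : ℂ) * (χ (-1) : ℂ) = 1 := by
    intro χ
    rw [← Units.val_mul, ← map_mul, neg_mul_neg, one_mul, map_one, Units.val_one]
  -- the reindexing identity
  have key : ∀ χ : Eˣ →* ℂˣ,
      (∑ x : Eˣ, (χ x : ℂ) * ψ (-(Algebra.trace (ZMod p) E (x : E))))
        = (χ (-1) : ℂ) * gaussSumE (ZMod p) χ ψ := by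
    intro χ
    rw [gaussSumE, Finset.mul_sum]
    refine Fintype.sum_equiv (Equiv.neg Eˣ) _ _ ?_
    intro x
    have h1 : ((Equiv.neg Eˣ x : Eˣ) : E) = -(x : E) := by
      simp [Equiv.neg_apply]
    have h2 : χ (Equiv.neg Eˣ x) = χ (-1) * χ x := by
      rw [Equiv.neg_apply, ← map_mul, neg_one_mul]
    have h3 : Algebra.trace (ZMod p) E (-(x : E)) = -(Algebra.trace (ZMod p) E (x : E)) :=
      map_neg _ _
    rw [h2, h1, h3, Units.val_mul, ← mul_assoc, ← mul_assoc, hsq, one_mul]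
  -- Step B : apply the Galois automorphism σ
  obtain ⟨K, σ, hσ⟩ := exists_sigma (p * m) c hMne hcM
  have hσval : ∀ (ω : ℂ) (hω : ω ^ (p * m) = 1) (hmem' : ω ∈ K),
      σ ⟨ω, hmem'⟩ = ω ^ c := by
    intro ω hω hmem'
    obtain ⟨h1, h2⟩ := hσ ω hω
    exact h2
  set S : (Eˣ →* ℂˣ) → K := fun χ => ∑ x : Eˣ,
    ((⟨(χ x : ℂ), ((hσ _ (hχM χ x)).choose)⟩ : K) *
      (⟨ψ (Algebra.trace (ZMod p) E (x : E)), ((hσ _ (hψM _)).choose)⟩ : K)) with hS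
  have hScoe : ∀ χ : Eˣ →* ℂˣ, ((S χ : K) : ℂ) = gaussSumE (ZMod p) χ ψ := by
    intro χ
    rw [hS, gaussSumE]
    push_cast
    rfl
  have hSeq : S χ₁ = S χ₂ := by
    apply Subtype.ext
    rw [hScoe, hScoe]
    exact h
  have hσS : ∀ χ : Eˣ →* ℂˣ, σ (S χ) = (χ (-1) : ℂ) * gaussSumE (ZMod p) χ ψ := by
    intro χ
    rw [hS]
    simp only [map_sum, map_mul]
    rw [← key χ]
    refine Finset.sum_congr rfl fun x _ => ?_
    rw [hσval _ (hχM χ x), hσval _ (hψM _), hχc, hψc]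
  have eq1 : (χ₁ (-1) : ℂ) * gaussSumE (ZMod p) χ₁ ψ
      = (χ₂ (-1) : ℂ) * gaussSumE (ZMod p) χ₂ ψ := by
    rw [← hσS, ← hσS, hSeq]
  -- Step A : complex conjugation
  have hconj : ∀ z : ℂ, z ^ (p * m) = 1 → (starRingEnd ℂ) z = z⁻¹ := fun z hz =>
    (Complex.inv_eq_conj (Complex.norm_eq_one_of_pow_eq_one hz hMne)).symm
  have hA : ∀ χ : Eˣ →* ℂˣ, (starRingEnd ℂ) (gaussSumE (ZMod p) χ ψ)
      = (χ (-1) : ℂ) * gaussSumE (ZMod p) χ⁻¹ ψ := by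
    intro χ
    rw [gaussSumE, map_sum]
    have hterm : ∀ x : Eˣ, (starRingEnd ℂ) ((χ x : ℂ) * ψ (Algebra.trace (ZMod p) E (x : E)))
        = ((χ⁻¹ x : ℂˣ) : ℂ) * ψ (-(Algebra.trace (ZMod p) E (x : E))) := by
      intro x
      rw [map_mul, hconj _ (hχM χ x), hconj _ (hψM _)]
      congr 1
      · rw [MonoidHom.inv_apply, ← Units.val_inv_eq_inv_val]
      · exact (eq_inv_of_mul_eq_one_left (hψinv _)).symm
    rw [Finset.sum_congr rfl (fun x _ => hterm x), key χ⁻¹]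
    congr 1
    rw [MonoidHom.inv_apply]
    congr 1
    exact inv_eq_of_mul_eq_one_right (by rw [← map_mul, neg_mul_neg, one_mul, map_one])
  -- conjugate eq1 and conclude
  have hreal : ∀ χ : Eˣ →* ℂˣ, (starRingEnd ℂ) ((χ (-1) : ℂ)) = (χ (-1) : ℂ) := by
    intro χ
    rcases mul_self_eq_one_iff.mp (hsq χ) with h' | h' <;> rw [h'] <;> simp
  have eq2 := congrArg (starRingEnd ℂ) eq1
  rw [map_mul, map_mul, hreal, hreal, hA, hA, ← mul_assoc, ← mul_assoc, hsq, hsq,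
    one_mul, one_mul] at eq2
  exact eq2
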